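/- Temporal band-limit of wave data (key step in the temporal sampling theorem): Let Ω > 0 and let f : ℝ² → ℂ be a Schwartz function whose Fourier transform is supported in the closed ball {ξ ∈ ℝ² : ‖ξ‖ ≤ Ω}. Define p(x, t) = (2π)^{-2} ∫_{ℝ²} cos(t‖ξ‖) (ℱf)(ξ) e^{i⟨x, ξ⟩} dξ. Then for every fixed x ∈ ℝ², the function t ↦ p(x, t) is band-limited to [-Ω, Ω] in the distributional sense: for every Schwartz function ψ : ℝ → ℂ whose Fourier transform vanishes on [-Ω, Ω], one has ∫_ℝ p(x, t) ψ(t) dt = 0. -/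

import Mathlib

open MeasureTheory

noncomputable section

/-- The plane `ℝ²` as a Euclidean space. -/
abbrev E2 := EuclideanSpace ℝ (Fin 2)

/-- Fourier transform on `ℝ²` with the convention `ℱf(ξ) = ∫ f(x) e^{-i⟨x,ξ⟩} dx`. -/
def fourier2 (f : E2 → ℂ) (ξ : E2) : ℂ :=
  ∫ x : E2, Complex.exp (-(Complex.I * ((inner ℝ x ξ : ℝ) : ℂ))) * f x

/-- Fourier transform on `ℝ` with the convention `ℱg(ω) = ∫ g(t) e^{-iωt} dt`. -/
def fourier1 (g : ℝ → ℂ) (ω : ℝ) : ℂ :=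
  ∫ t : ℝ, Complex.exp (-(Complex.I * ω * t)) * g t

/-- The Fourier-multiplier wave solution
`p(x,t) = (2π)⁻² ∫ cos(t‖ξ‖) ℱf(ξ) e^{i⟨x,ξ⟩} dξ`. -/
def waveSol (f : E2 → ℂ) (x : E2) (t : ℝ) : ℂ :=
  (1 / (2 * Real.pi) ^ 2 : ℂ) *
    ∫ ξ : E2, (Real.cos (t * ‖ξ‖) : ℂ) * fourier2 f ξ *
      Complex.exp (Complex.I * ((inner ℝ x ξ : ℝ) : ℂ))

/-- Modulated Schwartz functions are integrable. -/
lemma integrable_exp_mul_schwartz (ψ : SchwartzMap ℝ ℂ) (ω : ℝ) :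
    Integrable (fun t : ℝ => Complex.exp (-(Complex.I * ω * t)) * ψ t) := by
  refine (ψ.integrable).bdd_mul (c := 1) ?_ (Filter.Eventually.of_forall fun t => ?_)
  · exact (Complex.continuous_exp.comp (by continuity)).aestronglyMeasurable
  · simp [Complex.norm_exp]

/-- The cosine-transform as an average of two Fourier evaluations. -/
lemma integral_cos_mul_schwartz (ψ : SchwartzMap ℝ ℂ) (r : ℝ) :
    ∫ t : ℝ, (Real.cos (t * r) : ℂ) * ψ t
      = (fourier1 ψ (-r) + fourier1 ψ r) / 2 := by
  have key : ∀ t : ℝ, (Real.cos (t * r) : ℂ) * ψ t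
      = (Complex.exp (-(Complex.I * (-r : ℝ) * t)) * ψ t
          + Complex.exp (-(Complex.I * r * t)) * ψ t) / 2 := by
    intro t
    have h := Complex.two_cos (x := ((t * r : ℝ) : ℂ))
    have hc : (Real.cos (t * r) : ℂ) = Complex.cos ((t * r : ℝ) : ℂ) := by
      simp [Complex.ofReal_cos]
    have h1 : Complex.exp (((t * r : ℝ) : ℂ) * Complex.I)
        = Complex.exp (-(Complex.I * ((-r : ℝ) : ℂ) * (t : ℂ))) := by
      congr 1; push_cast; ring
    have h2 : Complex.exp (-(((t * r : ℝ) : ℂ) * Complex.I))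
        = Complex.exp (-(Complex.I * ((r : ℝ) : ℂ) * (t : ℂ))) := by
      congr 1; push_cast; ring
    rw [hc]
    have : Complex.cos ((t * r : ℝ) : ℂ)
        = (Complex.exp (-(Complex.I * ((-r : ℝ) : ℂ) * (t : ℂ)))
            + Complex.exp (-(Complex.I * ((r : ℝ) : ℂ) * (t : ℂ)))) / 2 := by
      rw [← h1, ← h2]
      rw [neg_mul] at h
      linear_combination h / 2
    rw [this]; ring
  calc ∫ t : ℝ, (Real.cos (t * r) : ℂ) * ψ t
      = ∫ t : ℝ, (Complex.exp (-(Complex.I * (-r : ℝ) * t)) * ψ t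
          + Complex.exp (-(Complex.I * r * t)) * ψ t) / 2 := by
        exact integral_congr_ae (Filter.Eventually.of_forall key)
    _ = (∫ t : ℝ, (Complex.exp (-(Complex.I * (-r : ℝ) * t)) * ψ t
          + Complex.exp (-(Complex.I * r * t)) * ψ t)) / 2 := integral_div _ _
    _ = (fourier1 ψ (-r) + fourier1 ψ r) / 2 := by
        rw [integral_add (integrable_exp_mul_schwartz ψ (-r))
          (integrable_exp_mul_schwartz ψ r)]
        rfl

lemma continuous_fourier2 (f : SchwartzMap E2 ℂ) : Continuous (fourier2 f) := by
  refine continuous_of_dominated (F := fun ξ x =>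
      Complex.exp (-(Complex.I * ((inner ℝ x ξ : ℝ) : ℂ))) * f x)
      (bound := fun x => ‖f x‖) ?_ ?_ f.integrable.norm ?_
  · intro ξ
    exact ((Complex.continuous_exp.comp
        ((continuous_const.mul (Complex.continuous_ofReal.comp
          (Continuous.inner continuous_id continuous_const))).neg)).mul
        f.continuous).aestronglyMeasurable
  · intro ξ
    filter_upwards with x
    simp [Complex.norm_exp]
  · filter_upwards with x
    exact (Complex.continuous_exp.comp
      ((continuous_const.mul (Complex.continuous_ofReal.comp
        (Continuous.inner continuous_const continuous_id))).neg)).mul continuous_const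

/-- **Temporal band-limit of wave data.**  If the Schwartz initial pressure `f`
has Fourier transform supported in the closed ball of radius `Ω`, then for
every fixed `x` the wave data `t ↦ p(x,t)` is band-limited to `[-Ω, Ω]` in the
distributional sense: it annihilates every Schwartz test function whose
Fourier transform vanishes on `[-Ω, Ω]`. -/
theorem waveSol_temporal_bandlimit
    (Ω : ℝ) (hΩ : 0 < Ω) (f : SchwartzMap E2 ℂ)
    (hsupp : ∀ ξ : E2, ξ ∉ Metric.closedBall (0 : E2) Ω → fourier2 f ξ = 0) :
    ∀ x : E2, ∀ ψ : SchwartzMap ℝ ℂ,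
      (∀ ω ∈ Set.Icc (-Ω) Ω, fourier1 ψ ω = 0) →
      ∫ t : ℝ, waveSol f x t * ψ t = 0 := by
  intro x ψ hψ
  set F : E2 → ℂ := fourier2 f with hF
  have hFcont : Continuous F := continuous_fourier2 f
  have hFc : HasCompactSupport F :=
    HasCompactSupport.intro (isCompact_closedBall (0 : E2) Ω) hsupp
  have hFint : Integrable F := hFcont.integrable_of_hasCompactSupport hFc
  -- the joint integrand
  set g : E2 × ℝ → ℂ := fun z =>
    (Real.cos (z.2 * ‖z.1‖) : ℂ) * F z.1 *
      Complex.exp (Complex.I * ((inner ℝ x z.1 : ℝ) : ℂ)) * ψ z.2 with hg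
  have hgcont : Continuous g := by
    apply Continuous.mul
    apply Continuous.mul
    apply Continuous.mul
    · exact Complex.continuous_ofReal.comp
        (Real.continuous_cos.comp (continuous_snd.mul (continuous_norm.comp continuous_fst)))
    · exact hFcont.comp continuous_fst
    · exact Complex.continuous_exp.comp
        (continuous_const.mul (Complex.continuous_ofReal.comp
          (Continuous.inner continuous_const continuous_fst)))
    · exact ψ.continuous.comp continuous_snd
  have hgint : Integrable g (volume.prod volume) := by
    refine Integrable.mono' (hFint.norm.mul_prod ψ.integrable.norm)
      hgcont.aestronglyMeasurable ?_
    filter_upwards with z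
    have h1 : ‖(Real.cos (z.2 * ‖z.1‖) : ℂ)‖ ≤ 1 := by
      rw [Complex.norm_real, Real.norm_eq_abs]
      exact Real.abs_cos_le_one _
    have h2 : ‖Complex.exp (Complex.I * ((inner ℝ x z.1 : ℝ) : ℂ))‖ = 1 := by
      simp [Complex.norm_exp]
    calc ‖g z‖ = ‖(Real.cos (z.2 * ‖z.1‖) : ℂ)‖ * ‖F z.1‖ *
          ‖Complex.exp (Complex.I * ((inner ℝ x z.1 : ℝ) : ℂ))‖ * ‖ψ z.2‖ := by
            simp [hg]
      _ ≤ 1 * ‖F z.1‖ * 1 * ‖ψ z.2‖ := by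
            gcongr
            all_goals first | exact h1 | exact h2.le
      _ = ‖F z.1‖ * ‖ψ z.2‖ := by ring
  have step1 : ∫ t : ℝ, waveSol f x t * ψ t
      = (1 / (2 * Real.pi) ^ 2 : ℂ) * ∫ t : ℝ, ∫ ξ : E2, g (ξ, t) := by
    rw [← integral_const_mul]
    congr 1; funext t
    unfold waveSol
    rw [mul_assoc]
    congr 1
    rw [← integral_mul_const]
  have step2 : ∫ t : ℝ, ∫ ξ : E2, g (ξ, t) = ∫ ξ : E2, ∫ t : ℝ, g (ξ, t) :=
    (integral_integral_swap (by exact hgint)).symm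
  have step3 : ∀ ξ : E2, (∫ t : ℝ, g (ξ, t)) = 0 := by
    intro ξ
    have hrw : (∫ t : ℝ, g (ξ, t))
        = (F ξ * Complex.exp (Complex.I * ((inner ℝ x ξ : ℝ) : ℂ))) *
            ∫ t : ℝ, (Real.cos (t * ‖ξ‖) : ℂ) * ψ t := by
      rw [← integral_const_mul]
      congr 1; funext t
      simp only [hg]
      ring
    rw [hrw, integral_cos_mul_schwartz]
    by_cases hξ : ‖ξ‖ ≤ Ω
    · have h1 : fourier1 ψ (-‖ξ‖) = 0 :=
        hψ _ ⟨by linarith, by linarith [norm_nonneg ξ]⟩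
      have h2 : fourier1 ψ ‖ξ‖ = 0 :=
        hψ _ ⟨by linarith [norm_nonneg ξ], hξ⟩
      rw [h1, h2]; ring
    · have : F ξ = 0 := by
        apply hsupp
        simp only [Metric.mem_closedBall, dist_zero_right]
        exact hξ
      rw [this]; ring
  rw [step1, step2]
  rw [integral_congr_ae (Filter.Eventually.of_forall step3)]
  simp
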